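/- Let (R, m) be a Noetherian local ring, I ⊆ R an ideal, and a ∈ m a nonzerodivisor on R/I^n for all n ≥ 1. Then the Rees algebra of the image of I in R/(a) satisfies R((I+aR)/aR) ≅ R(I) ⊗_R R/aR ≅ R(I)/a·R(I), and the fiber cone satisfies F((I+aR)/aR) ≅ F(I). -/

import Mathlib

open IsLocalRing

noncomputable section

/-- The embedding of `R^e` into the polynomial ring `S_R(R^e)` as linear forms. -/
def emb (R : Type*) [CommRing R] (e : ℕ) : (Fin e → R) →ₗ[R] MvPolynomial (Fin e) R where
  toFun v := ∑ i, v i • MvPolynomial.X i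
  map_add' x y := by simp [add_smul, Finset.sum_add_distrib]
  map_smul' r x := by simp [Finset.smul_sum, smul_smul]

/-- `E_n`, the `n`-th Rees power of `E ⊆ R^e`. -/
def reesPow {R : Type*} [CommRing R] {e : ℕ} (E : Submodule R (Fin e → R)) (n : ℕ) :
    Submodule R (MvPolynomial (Fin e) R) :=
  (Submodule.map (emb R e) E) ^ n

/-- The Rees algebra `R_G(E)` of `E ⊆ G = R^e`. -/
def ReesAlg {R : Type*} [CommRing R] {e : ℕ} (E : Submodule R (Fin e → R)) :
    Subalgebra R (MvPolynomial (Fin e) R) :=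
  Algebra.adjoin R (Submodule.map (emb R e) E : Set (MvPolynomial (Fin e) R))

/-- The quotient module `G_n/E_n`. -/
abbrev GmodE {R : Type*} [CommRing R] {e : ℕ} (E : Submodule R (Fin e → R)) (n : ℕ) :=
  ↥(reesPow (⊤ : Submodule R (Fin e → R)) n) ⧸
    (Submodule.comap (reesPow (⊤ : Submodule R (Fin e → R)) n).subtype (reesPow E n))

/-- Sup of lengths of `M`-regular sequences with entries in `I` (grade/depth). -/
def rdepth {R : Type*} [CommRing R] (I : Ideal R) (M : Type*) [AddCommGroup M] [Module R M] :
    ℕ∞ :=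
  ⨆ (rs : List R) (_ : ∀ r ∈ rs, r ∈ I) (_ : RingTheory.Sequence.IsRegular M rs),
    (rs.length : ℕ∞)

/-- Depth over a local ring. -/
def mdepth (R : Type*) [CommRing R] [IsLocalRing R] (M : Type*) [AddCommGroup M] [Module R M] :
    ℕ∞ :=
  rdepth (maximalIdeal R) M

/-- The extension `m·R_G(E)` of the maximal ideal to the Rees algebra. -/
def fibIdeal (R : Type*) [CommRing R] [IsLocalRing R] {e : ℕ} (E : Submodule R (Fin e → R)) :
    Ideal ↥(ReesAlg E) :=
  Ideal.map (algebraMap R ↥(ReesAlg E)) (maximalIdeal R)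

/-- The analytic spread `ℓ_G(E) = dim R_G(E)/m·R_G(E)`. -/
def aSpread (R : Type*) [CommRing R] [IsLocalRing R] {e : ℕ} (E : Submodule R (Fin e → R)) :
    WithBot ℕ∞ :=
  ringKrullDim (↥(ReesAlg E) ⧸ fibIdeal R E)

/-- The image `(E + IG)/IG ⊆ (R/I)^e`. -/
def pushE {R : Type*} [CommRing R] {e : ℕ} (I : Ideal R) (E : Submodule R (Fin e → R)) :
    Submodule (R ⧸ I) (Fin e → R ⧸ I) :=
  Submodule.span (R ⧸ I) ((fun v i => Ideal.Quotient.mk I (v i)) '' (E : Set (Fin e → R)))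


open scoped TensorProduct in
noncomputable def quotEquivTensor (R A : Type*) [CommRing R] [CommRing A] [Algebra R A]
    (I : Ideal R) :
    (A ⧸ Ideal.map (algebraMap R A) I) ≃ₐ[R] (A ⊗[R] (R ⧸ I)) := by
  have hJ : ∀ x ∈ Ideal.map (algebraMap R A) I,
      (Algebra.TensorProduct.includeLeft : A →ₐ[R] A ⊗[R] (R ⧸ I)) x = 0 := by
    have hle : Ideal.map (algebraMap R A) I ≤
        RingHom.ker (Algebra.TensorProduct.includeLeft :
          A →ₐ[R] A ⊗[R] (R ⧸ I)).toRingHom := by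
      rw [Ideal.map_le_iff_le_comap]
      intro r hr
      show (algebraMap R A r) ⊗ₜ[R] (1 : R ⧸ I) = 0
      rw [Algebra.algebraMap_eq_smul_one, TensorProduct.smul_tmul]
      have : r • (1 : R ⧸ I) = 0 := by
        rw [Algebra.smul_def, mul_one]
        exact Ideal.Quotient.eq_zero_iff_mem.mpr hr
      rw [this, TensorProduct.tmul_zero]
    exact fun x hx => hle hx
  have hg : ∀ r ∈ I,
      ((Ideal.Quotient.mkₐ R (Ideal.map (algebraMap R A) I)).comp (Algebra.ofId R A)) r = 0 := by
    intro r hr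
    simp only [AlgHom.comp_apply, Algebra.ofId_apply, Ideal.Quotient.mkₐ_eq_mk]
    exact Ideal.Quotient.eq_zero_iff_mem.mpr (Ideal.mem_map_of_mem _ hr)
  refine AlgEquiv.ofAlgHom
    (Ideal.Quotient.liftₐ _ Algebra.TensorProduct.includeLeft hJ)
    (Algebra.TensorProduct.lift (Ideal.Quotient.mkₐ R _)
      (Ideal.Quotient.liftₐ I _ hg) (fun _ _ => Commute.all _ _)) ?_ ?_
  · ext x
    · simp
      exact Ideal.Quotient.lift_mk _ _ _
    · obtain ⟨r, rfl⟩ := Ideal.Quotient.mk_surjective x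
      simp
      rw [Algebra.algebraMap_eq_smul_one, TensorProduct.smul_tmul,
        Algebra.smul_def, mul_one, Ideal.Quotient.algebraMap_eq]
  · ext x
    obtain ⟨y, rfl⟩ := Ideal.Quotient.mk_surjective x
    simp
    erw [Ideal.Quotient.lift_mk]
    simp

section main
variable {R : Type*} [CommRing R] (I : Ideal R) (a : R)

lemma mem_rees_map (f : Polynomial R) (hf : f ∈ reesAlgebra I) :
    f.map (Ideal.Quotient.mk (Ideal.span {a})) ∈
      reesAlgebra (I.map (Ideal.Quotient.mk (Ideal.span {a}))) := by
  rw [mem_reesAlgebra_iff] at hf ⊢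
  intro i
  rw [Polynomial.coeff_map, ← Ideal.map_pow]
  exact Ideal.mem_map_of_mem _ (hf i)

noncomputable def psi : ↥(reesAlgebra I) →+* ↥(reesAlgebra (I.map (Ideal.Quotient.mk (Ideal.span {a})))) where
  toFun f := ⟨f.1.map (Ideal.Quotient.mk (Ideal.span {a})), mem_rees_map I a f.1 f.2⟩
  map_one' := Subtype.ext (by simp)
  map_mul' x y := Subtype.ext (by push_cast; simp [Polynomial.map_mul])
  map_zero' := Subtype.ext (by simp)
  map_add' x y := Subtype.ext (by push_cast; simp [Polynomial.map_add])

lemma psi_surj : Function.Surjective (psi I a) := by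
  intro g
  have hex : ∀ n : ℕ, ∃ x, x ∈ I ^ n ∧ (Ideal.Quotient.mk (Ideal.span {a})) x = g.1.coeff n := by
    intro n
    have h1 : g.1.coeff n ∈ (I.map (Ideal.Quotient.mk (Ideal.span {a}))) ^ n :=
      (mem_reesAlgebra_iff _ _).1 g.2 n
    rw [← Ideal.map_pow] at h1
    exact (Ideal.mem_map_iff_of_surjective _ Ideal.Quotient.mk_surjective).1 h1
  choose c hc1 hc2 using hex
  set N := g.1.natDegree with hN
  set f : Polynomial R := ∑ n ∈ Finset.range (N + 1), Polynomial.monomial n (c n) with hfdef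
  have hcoeff : ∀ k, f.coeff k = if k < N + 1 then c k else 0 := by
    intro k
    simp [hfdef, Polynomial.finset_sum_coeff, Polynomial.coeff_monomial]
  have hfmem : f ∈ reesAlgebra I := by
    rw [mem_reesAlgebra_iff]
    intro i
    rw [hcoeff]
    split
    · exact hc1 i
    · exact zero_mem _
  refine ⟨⟨f, hfmem⟩, Subtype.ext ?_⟩
  show f.map _ = g.1
  ext k
  rw [Polynomial.coeff_map, hcoeff]
  split
  · exact hc2 k
  · rw [map_zero]
    exact (Polynomial.coeff_eq_zero_of_natDegree_lt (by omega)).symm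

lemma key_div (hreg : ∀ n ≥ 1, IsSMulRegular (R ⧸ I ^ n) a) (n : ℕ) (x : R)
    (hxI : x ∈ I ^ n) (hxa : x ∈ Ideal.span {a}) : ∃ r, r ∈ I ^ n ∧ x = a * r := by
  obtain ⟨r, rfl⟩ := Ideal.mem_span_singleton'.1 hxa
  rcases Nat.eq_zero_or_pos n with hn | hn
  · exact ⟨r, by simp [hn], (mul_comm r a)⟩
  · refine ⟨r, ?_, (mul_comm r a)⟩
    have h0 : a • (Ideal.Quotient.mk (I ^ n) r) = 0 := by
      rw [Algebra.smul_def, Ideal.Quotient.algebraMap_eq, ← map_mul,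
        Ideal.Quotient.eq_zero_iff_mem]
      rwa [mul_comm]
    have h1 : a • (Ideal.Quotient.mk (I ^ n) r) = a • (0 : R ⧸ I ^ n) := by
      rw [h0, smul_zero]
    have h2 := hreg n hn h1
    rwa [Ideal.Quotient.eq_zero_iff_mem] at h2

lemma ker_psi (hreg : ∀ n ≥ 1, IsSMulRegular (R ⧸ I ^ n) a) :
    RingHom.ker (psi I a) = Ideal.map (algebraMap R ↥(reesAlgebra I)) (Ideal.span {a}) := by
  apply le_antisymm
  · intro f hf
    have hf0 : f.1.map (Ideal.Quotient.mk (Ideal.span {a})) = 0 := congrArg Subtype.val hf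
    have hco : ∀ n, f.1.coeff n ∈ Ideal.span {a} := by
      intro n
      have h : (f.1.map (Ideal.Quotient.mk (Ideal.span {a}))).coeff n = 0 := by
        rw [hf0]; simp
      rw [Polynomial.coeff_map] at h
      exact Ideal.Quotient.eq_zero_iff_mem.1 h
    have hex : ∀ n, ∃ r, r ∈ I ^ n ∧ f.1.coeff n = a * r := fun n =>
      key_div I a hreg n _ ((mem_reesAlgebra_iff _ _).1 f.2 n) (hco n)
    choose r hr1 hr2 using hex
    set N := f.1.natDegree with hN
    set g : Polynomial R := ∑ n ∈ Finset.range (N + 1), Polynomial.monomial n (r n) with hgdef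
    have hgco : ∀ k, g.coeff k = if k < N + 1 then r k else 0 := by
      intro k
      simp [hgdef, Polynomial.finset_sum_coeff, Polynomial.coeff_monomial]
    have hgmem : g ∈ reesAlgebra I := by
      rw [mem_reesAlgebra_iff]
      intro i
      rw [hgco]
      split
      · exact hr1 i
      · exact zero_mem _
    have hfg : f.1 = Polynomial.C a * g := by
      ext k
      rw [Polynomial.coeff_C_mul, hgco]
      split
      · exact hr2 k
      · rw [mul_zero]
        exact Polynomial.coeff_eq_zero_of_natDegree_lt (by omega)
    have hfeq : f = algebraMap R ↥(reesAlgebra I) a * ⟨g, hgmem⟩ := by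
      apply Subtype.ext
      push_cast
      simpa [Polynomial.algebraMap_apply] using hfg
    rw [hfeq]
    exact Ideal.mul_mem_right _ _
      (Ideal.mem_map_of_mem _ (Ideal.mem_span_singleton_self a))
  · rw [Ideal.map_le_iff_le_comap]
    intro x hx
    show psi I a (algebraMap _ _ x) = 0
    apply Subtype.ext
    have hval : ((algebraMap R ↥(reesAlgebra I) x : ↥(reesAlgebra I)) : Polynomial R) =
        Polynomial.C x := rfl
    show ((algebraMap R ↥(reesAlgebra I) x : ↥(reesAlgebra I)) : Polynomial R).map
        (Ideal.Quotient.mk (Ideal.span {a})) = 0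
    rw [hval, Polynomial.map_C, Ideal.Quotient.eq_zero_iff_mem.2 hx, Polynomial.C_0]

end main

open scoped TensorProduct in
set_option synthInstance.maxHeartbeats 1000000 in
set_option maxHeartbeats 1000000 in
theorem stmt19 (R : Type*) [CommRing R] [IsNoetherianRing R] [IsLocalRing R]
    (I : Ideal R) (a : R) (ha : a ∈ maximalIdeal R)
    (hreg : ∀ n ≥ 1, IsSMulRegular (R ⧸ I ^ n) a) :
    Nonempty (↥(reesAlgebra (Ideal.map (Ideal.Quotient.mk (Ideal.span {a})) I)) ≃+*
        (↥(reesAlgebra I) ⊗[R] (R ⧸ Ideal.span {a}))) ∧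
    Nonempty (↥(reesAlgebra (Ideal.map (Ideal.Quotient.mk (Ideal.span {a})) I)) ≃+*
        (↥(reesAlgebra I) ⧸ Ideal.map (algebraMap R ↥(reesAlgebra I)) (Ideal.span {a}))) ∧
    Nonempty ((↥(reesAlgebra (Ideal.map (Ideal.Quotient.mk (Ideal.span {a})) I)) ⧸
          Ideal.map
            (algebraMap (R ⧸ Ideal.span {a})
              ↥(reesAlgebra (Ideal.map (Ideal.Quotient.mk (Ideal.span {a})) I)))
            (Ideal.map (Ideal.Quotient.mk (Ideal.span {a})) (maximalIdeal R))) ≃+*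
        (↥(reesAlgebra I) ⧸ Ideal.map (algebraMap R ↥(reesAlgebra I)) (maximalIdeal R))) := by

  set S := ↥(reesAlgebra I)
  set T := ↥(reesAlgebra (Ideal.map (Ideal.Quotient.mk (Ideal.span {a})) I))
  have hker := ker_psi I a hreg
  have hsurj := psi_surj I a
  -- second isomorphism
  have e2 : (S ⧸ Ideal.map (algebraMap R S) (Ideal.span {a})) ≃+* T :=
    (Ideal.quotEquivOfEq hker.symm).trans (RingHom.quotientKerEquivOfSurjective hsurj)
  refine ⟨⟨e2.symm.trans (quotEquivTensor R S (Ideal.span {a})).toRingEquiv⟩, ⟨e2.symm⟩, ?_⟩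
  -- third isomorphism
  set m := IsLocalRing.maximalIdeal R
  set J' : Ideal T := Ideal.map (algebraMap (R ⧸ Ideal.span {a}) T)
    (Ideal.map (Ideal.Quotient.mk (Ideal.span {a})) m)
  set M : Ideal S := Ideal.map (algebraMap R S) m
  have hcomp : (psi I a).comp (algebraMap R S) =
      (algebraMap (R ⧸ Ideal.span {a}) T).comp (Ideal.Quotient.mk (Ideal.span {a})) := by
    refine RingHom.ext fun r => Subtype.ext ?_
    show (Polynomial.C r).map (Ideal.Quotient.mk (Ideal.span {a})) =
      Polynomial.C (Ideal.Quotient.mk (Ideal.span {a}) r)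
    exact Polynomial.map_C _
  have hJ' : J' = Ideal.map (psi I a) M := by
    simp only [J', M, Ideal.map_map, hcomp]
  set χ : S →+* T ⧸ J' := (Ideal.Quotient.mk J').comp (psi I a)
  have hχsurj : Function.Surjective χ :=
    (Ideal.Quotient.mk_surjective).comp hsurj
  have hkerχ : RingHom.ker χ = M := by
    have h1 : RingHom.ker χ = Ideal.comap (psi I a) J' := by
      rw [← RingHom.comap_ker]
      congr 1
      exact Ideal.mk_ker
    rw [h1, hJ', Ideal.comap_map_of_surjective _ hsurj]
    refine sup_eq_left.2 ?_
    have hb : Ideal.comap (psi I a) ⊥ = RingHom.ker (psi I a) := rfl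
    rw [hb, hker]
    exact Ideal.map_mono (Ideal.span_le.2 (by simpa using ha))
  exact ⟨((Ideal.quotEquivOfEq hkerχ.symm).trans
    (RingHom.quotientKerEquivOfSurjective hχsurj)).symm⟩

end
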